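/- Fix g > 0, Δt > 0 and any α ∈ ℝ. Let φⁿ, φⁿ⁺¹ : ℝ² → ℝ be differentiable with square-integrable gradients on Ω and square-integrable traces on (0,1), and let ηⁿ, ηⁿ⁺¹ : (0,1) → ℝ be square-integrable. Define the midpoint quantities φ^m = (1/2)(φⁿ + φⁿ⁺¹), φₜ^m = (φⁿ⁺¹ − φⁿ)/Δt, η^m = (1/2)(ηⁿ + ηⁿ⁺¹), ηₜ^m = (ηⁿ⁺¹ − ηⁿ)/Δt. If the monolithic midpoint-discretized residual vanishes at the particular test pair w = φₜ^m, v = 2ηₜ^m − (α/g)·φₜ^m, i.e. (∇w, ∇φ^m)_Ω − (w, ηₜ^m)_Γ + (1/2)·(v + (α/g)·w, φₜ^m + g·η^m)_Γ = 0, then the total discrete energy is exactly conserved: (1/2)·‖∇φⁿ⁺¹‖²_Ω + (g/2)·‖ηⁿ⁺¹‖²_Γ = (1/2)·‖∇φⁿ‖²_Ω + (g/2)·‖ηⁿ‖²_Γ. -/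

import Mathlib

open MeasureTheory Real Set

noncomputable section

/-- The computational domain `Ω = (0,1) × (0,1) ⊂ ℝ²`. -/
def Om : Set (ℝ × ℝ) := Ioo (0:ℝ) 1 ×ˢ Ioo (0:ℝ) 1

/-- Partial derivative in the horizontal direction `x`. -/
def pdx (w : ℝ × ℝ → ℝ) (p : ℝ × ℝ) : ℝ := fderiv ℝ w p (1, 0)

/-- Partial derivative in the vertical direction `z`. -/
def pdz (w : ℝ × ℝ → ℝ) (p : ℝ × ℝ) : ℝ := fderiv ℝ w p (0, 1)

/-- Interior inner product `(∇w, ∇φ)_Ω = ∫_Ω ∇w·∇φ`. -/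
def ipOm (w φ : ℝ × ℝ → ℝ) : ℝ := ∫ p in Om, (pdx w p * pdx φ p + pdz w p * pdz φ p)

/-- Free-surface inner product `(a, b)_Γ = ∫₀¹ a(x) b(x) dx`. -/
def ipGa (a b : ℝ → ℝ) : ℝ := ∫ x in Ioo (0:ℝ) 1, a x * b x

/-- The trace of `w : ℝ² → ℝ` on the free surface `Γ` (the top edge `z = 1`). -/
def tr (w : ℝ × ℝ → ℝ) : ℝ → ℝ := fun x => w (x, 1)

/-- The gradient of `w` is square-integrable on `Ω`. -/
def GradL2 (w : ℝ × ℝ → ℝ) : Prop :=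
  MemLp (pdx w) 2 (volume.restrict Om) ∧ MemLp (pdz w) 2 (volume.restrict Om)

/-- The trace of `w` on the free surface is square-integrable on `(0,1)`. -/
def TraceL2 (w : ℝ × ℝ → ℝ) : Prop :=
  MemLp (tr w) 2 (volume.restrict (Ioo (0:ℝ) 1))

/-- A boundary function `v : (0,1) → ℝ` is square-integrable. -/
def BdryL2 (v : ℝ → ℝ) : Prop :=
  MemLp v 2 (volume.restrict (Ioo (0:ℝ) 1))

/-- The time-discrete monolithic bilinear form with parameter `α`:
`B_m(W,Φ) = (∇w,∇φ)_Ω − (2/Δt)(w,η)_Γ + (1/2)(v + (α/g)w, (2/Δt)φ + gη)_Γ`. -/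
def Bm (g Δt α : ℝ) (w : ℝ × ℝ → ℝ) (v : ℝ → ℝ) (φ : ℝ × ℝ → ℝ) (η : ℝ → ℝ) : ℝ :=
  ipOm w φ - (2 / Δt) * ipGa (tr w) η
    + (1 / 2) * ipGa (fun x => v x + (α / g) * tr w x)
        (fun x => (2 / Δt) * tr φ x + g * η x)

/-- Product of two `L²` functions is integrable. -/
lemma l2mul {α : Type*} {m : MeasurableSpace α} {μ : Measure α} {f h : α → ℝ}
    (hf : MemLp f 2 μ) (hh : MemLp h 2 μ) : Integrable (fun x => f x * h x) μ := by
  have h1 : Integrable (fun x => f x ^ 2) μ := hf.integrable_sq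
  have h2 : Integrable (fun x => h x ^ 2) μ := hh.integrable_sq
  have h3 : Integrable (fun x => (f x ^ 2 + h x ^ 2) / 2) μ := (h1.add h2).div_const 2
  refine h3.mono' (hf.aestronglyMeasurable.mul hh.aestronglyMeasurable) ?_
  filter_upwards with x
  have : ‖f x * h x‖ = |f x| * |h x| := by rw [norm_mul]; rfl
  rw [this]
  nlinarith [sq_nonneg (|f x| - |h x|), sq_abs (f x), sq_abs (h x), abs_nonneg (f x),
    abs_nonneg (h x)]

/-- Derivative of a scaled difference, applied to a vector. -/
lemma fderiv_sub_div_apply {f h : ℝ × ℝ → ℝ} (hf : Differentiable ℝ f)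
    (hh : Differentiable ℝ h) (c : ℝ) (p v : ℝ × ℝ) :
    fderiv ℝ (fun q => (f q - h q) / c) p v = (fderiv ℝ f p v - fderiv ℝ h p v) / c := by
  have h0 := ((hf p).hasFDerivAt.sub (hh p).hasFDerivAt).const_mul c⁻¹
  have e : (fun q => c⁻¹ * (f - h) q) = fun q => (f q - h q) / c :=
    funext fun q => (div_eq_inv_mul _ _).symm
  rw [e] at h0
  rw [h0.fderiv]
  simp [div_eq_inv_mul]

/-- Derivative of a scaled sum, applied to a vector. -/
lemma fderiv_add_mul_apply {f h : ℝ × ℝ → ℝ} (hf : Differentiable ℝ f)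
    (hh : Differentiable ℝ h) (c : ℝ) (p v : ℝ × ℝ) :
    fderiv ℝ (fun q => c * (f q + h q)) p v = c * (fderiv ℝ f p v + fderiv ℝ h p v) := by
  have h0 := ((hf p).hasFDerivAt.add (hh p).hasFDerivAt).const_mul c
  rw [show (fun q => c * (f q + h q)) = fun y => c * (f + h) y from rfl, h0.fderiv]
  simp [mul_add]

/-- If the monolithic midpoint-discretized residual vanishes at the particular test pair
`w = φₜ^m`, `v = 2ηₜ^m − (α/g)φₜ^m`, then the total discrete energy
`(1/2)‖∇φ‖²_Ω + (g/2)‖η‖²_Γ` is exactly conserved over the time step. -/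
theorem monolithic_midpoint_energy_conservation
    (g Δt α : ℝ) (hg : 0 < g) (hΔt : 0 < Δt)
    (φn φn1 : ℝ × ℝ → ℝ) (ηn ηn1 : ℝ → ℝ)
    (hφn : Differentiable ℝ φn) (hφn1 : Differentiable ℝ φn1)
    (hgφn : GradL2 φn) (hgφn1 : GradL2 φn1)
    (htφn : TraceL2 φn) (htφn1 : TraceL2 φn1)
    (hηn : BdryL2 ηn) (hηn1 : BdryL2 ηn1)
    (hres :
      ipOm (fun p => (φn1 p - φn p) / Δt) (fun p => (1 / 2) * (φn p + φn1 p))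
        - ipGa (tr fun p => (φn1 p - φn p) / Δt) (fun x => (ηn1 x - ηn x) / Δt)
        + (1 / 2) * ipGa
            (fun x => (2 * ((ηn1 x - ηn x) / Δt)
                - (α / g) * tr (fun p => (φn1 p - φn p) / Δt) x)
              + (α / g) * tr (fun p => (φn1 p - φn p) / Δt) x)
            (fun x => tr (fun p => (φn1 p - φn p) / Δt) x
              + g * ((1 / 2) * (ηn x + ηn1 x))) = 0) :
    (1 / 2) * ipOm φn1 φn1 + (g / 2) * ipGa ηn1 ηn1 =
      (1 / 2) * ipOm φn φn + (g / 2) * ipGa ηn ηn := by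
  have hΔne : Δt ≠ 0 := hΔt.ne'
  have hgne : g ≠ 0 := hg.ne'
  -- integrability of the squared gradients
  have hF1 : Integrable (fun p => pdx φn1 p * pdx φn1 p + pdz φn1 p * pdz φn1 p)
      (volume.restrict Om) := (l2mul hgφn1.1 hgφn1.1).add (l2mul hgφn1.2 hgφn1.2)
  have hF0 : Integrable (fun p => pdx φn p * pdx φn p + pdz φn p * pdz φn p)
      (volume.restrict Om) := (l2mul hgφn.1 hgφn.1).add (l2mul hgφn.2 hgφn.2)
  -- interior identity
  have h1' : 2 * Δt * ipOm (fun p => (φn1 p - φn p) / Δt) (fun p => (1 / 2) * (φn p + φn1 p))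
      = ipOm φn1 φn1 - ipOm φn φn := by
    unfold ipOm
    rw [← integral_sub hF1 hF0, ← integral_const_mul]
    refine integral_congr_ae (Filter.Eventually.of_forall fun p => ?_)
    simp only [pdx, pdz]
    rw [fderiv_sub_div_apply hφn1 hφn Δt p (1, 0), fderiv_sub_div_apply hφn1 hφn Δt p (0, 1),
      fderiv_add_mul_apply hφn hφn1 (1 / 2) p (1, 0),
      fderiv_add_mul_apply hφn hφn1 (1 / 2) p (0, 1)]
    field_simp
    ring
  -- boundary L² facts
  have htw : MemLp (fun x : ℝ => (φn1 (x, 1) - φn (x, 1)) / Δt) 2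
      (volume.restrict (Ioo (0:ℝ) 1)) := by
    have h0 := (htφn1.sub htφn).const_mul Δt⁻¹
    have e : (fun x : ℝ => Δt⁻¹ * ((tr φn1 - tr φn) x))
        = fun x : ℝ => (φn1 (x, 1) - φn (x, 1)) / Δt :=
      funext fun x => (div_eq_inv_mul _ _).symm
    rw [e] at h0
    exact h0
  have hηt : MemLp (fun x => (ηn1 x - ηn x) / Δt) 2 (volume.restrict (Ioo (0:ℝ) 1)) := by
    have h0 := (hηn1.sub hηn).const_mul Δt⁻¹
    have e : (fun x : ℝ => Δt⁻¹ * ((ηn1 - ηn) x)) = fun x => (ηn1 x - ηn x) / Δt :=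
      funext fun x => (div_eq_inv_mul _ _).symm
    rw [e] at h0
    exact h0
  have hηm : MemLp (fun x => (1 / 2 : ℝ) * (ηn x + ηn1 x)) 2
      (volume.restrict (Ioo (0:ℝ) 1)) := (hηn.add hηn1).const_mul (1 / 2)
  have hbig2 : MemLp (fun x : ℝ => (φn1 (x, 1) - φn (x, 1)) / Δt
      + g * ((1 / 2) * (ηn x + ηn1 x))) 2 (volume.restrict (Ioo (0:ℝ) 1)) :=
    htw.add (hηm.const_mul g)
  have hI2 : Integrable (fun x : ℝ => (2 * ((ηn1 x - ηn x) / Δt))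
      * ((φn1 (x, 1) - φn (x, 1)) / Δt + g * ((1 / 2) * (ηn x + ηn1 x))))
      (volume.restrict (Ioo (0:ℝ) 1)) := l2mul (hηt.const_mul 2) hbig2
  have hI1 : Integrable (fun x : ℝ => ((φn1 (x, 1) - φn (x, 1)) / Δt)
      * ((ηn1 x - ηn x) / Δt)) (volume.restrict (Ioo (0:ℝ) 1)) := l2mul htw hηt
  have hs1 : Integrable (fun x => ηn1 x * ηn1 x) (volume.restrict (Ioo (0:ℝ) 1)) :=
    l2mul hηn1 hηn1
  have hs0 : Integrable (fun x => ηn x * ηn x) (volume.restrict (Ioo (0:ℝ) 1)) :=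
    l2mul hηn hηn
  -- boundary identity
  have h2' : 2 * Δt * ((1 / 2) * ipGa
        (fun x => (2 * ((ηn1 x - ηn x) / Δt)
            - (α / g) * tr (fun p => (φn1 p - φn p) / Δt) x)
          + (α / g) * tr (fun p => (φn1 p - φn p) / Δt) x)
        (fun x => tr (fun p => (φn1 p - φn p) / Δt) x + g * ((1 / 2) * (ηn x + ηn1 x)))
      - ipGa (tr fun p => (φn1 p - φn p) / Δt) (fun x => (ηn1 x - ηn x) / Δt))
      = g * (ipGa ηn1 ηn1 - ipGa ηn ηn) := by
    have e1 : (fun x => (2 * ((ηn1 x - ηn x) / Δt)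
          - (α / g) * tr (fun p => (φn1 p - φn p) / Δt) x)
        + (α / g) * tr (fun p => (φn1 p - φn p) / Δt) x)
        = fun x => 2 * ((ηn1 x - ηn x) / Δt) := funext fun x => by ring
    rw [e1]
    unfold ipGa tr
    rw [show ((1 : ℝ) / 2) * (∫ x in Ioo (0:ℝ) 1, (2 * ((ηn1 x - ηn x) / Δt))
        * ((fun p : ℝ × ℝ => (φn1 p - φn p) / Δt) (x, 1) + g * ((1 / 2) * (ηn x + ηn1 x))))
      = ∫ x in Ioo (0:ℝ) 1, (1 / 2) * ((2 * ((ηn1 x - ηn x) / Δt))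
        * ((φn1 (x, 1) - φn (x, 1)) / Δt + g * ((1 / 2) * (ηn x + ηn1 x))))
      from (integral_const_mul _ _).symm]
    rw [← integral_sub (hI2.const_mul (1 / 2)) hI1, ← integral_sub hs1 hs0,
      ← integral_const_mul, ← integral_const_mul]
    refine integral_congr_ae (Filter.Eventually.of_forall fun x => ?_)
    field_simp
    ring
  linear_combination Δt * hres - (1 / 2) * h1' - (1 / 2) * h2'
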